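/- Let n ≤ N and a ∈ ℝ^{n×N} with a_{i1} ≥ ... ≥ a_{iN} > 0 and ∑_{j=1}^N a_{ij} = 1 for each i. Define ‖x‖_a = max{∑_{i=1}^n (∑_{j=1}^{ℓ_i} a_{ij})|x_i| : ℓ_i ≥ 0, ∑_i ℓ_i ≤ N}. Let M_i be Orlicz functions with M_i*(∑_{j=1}^m a_{ij}) = m/N for all m = 1,...,N. Then for all x ∈ ℝⁿ, (1/2)‖x‖_a ≤ ‖x‖_{ΣM_i} ≤ 2‖x‖_a. -/

import Mathlib

open Finset

/-- An Orlicz function: convex on `[0,∞)`, vanishing at `0`, positive on `(0,∞)`. -/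
def IsOrlicz (M : ℝ → ℝ) : Prop :=
  ConvexOn ℝ (Set.Ici 0) M ∧ M 0 = 0 ∧ ∀ t : ℝ, 0 < t → 0 < M t

/-- Legendre conjugate `M*(x) = sup_{t ≥ 0} (x t − M t)`. -/
noncomputable def orliczConj (M : ℝ → ℝ) (x : ℝ) : ℝ :=
  sSup {v : ℝ | ∃ t : ℝ, 0 ≤ t ∧ v = x * t - M t}

/-- Musielak-Orlicz (Luxemburg-type) functional `‖x‖_{Σ M_i}`. -/
noncomputable def musielakNorm {n : ℕ} (M : Fin n → ℝ → ℝ) (x : Fin n → ℝ) : ℝ :=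
  sInf {ρ : ℝ | 0 < ρ ∧ ∑ i, M i (|x i| / ρ) ≤ 1}

/-- Average over all permutations of `{1,…,n}`. -/
noncomputable def permAve (n : ℕ) (f : Equiv.Perm (Fin n) → ℝ) : ℝ :=
  (∑ π : Equiv.Perm (Fin n), f π) / (Nat.factorial n : ℝ)

/-- Maximum of a function on a nonempty `Fin n`. -/
noncomputable def maxFin {n : ℕ} (hn : 0 < n) (g : Fin n → ℝ) : ℝ :=
  Finset.univ.sup' (Finset.univ_nonempty_iff.mpr ⟨⟨0, hn⟩⟩) g


open Finset

namespace ApproxAux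

noncomputable def pS {n N : ℕ} (a : Fin n → Fin N → ℝ) (i : Fin n) (m : ℕ) : ℝ :=
  ∑ j ∈ Finset.univ.filter (fun j : Fin N => (j : ℕ) < m), a i j

lemma pS_eq {n N : ℕ} (a : Fin n → Fin N → ℝ) (i : Fin n) (m : ℕ) :
    (∑ j : Fin N, if (j : ℕ) < m then a i j else 0) = pS a i m :=
  (Finset.sum_filter _ _).symm

lemma pS_zero {n N : ℕ} (a : Fin n → Fin N → ℝ) (i : Fin n) : pS a i 0 = 0 := by
  simp [pS]

lemma card_filter_lt (N m : ℕ) (h : m ≤ N) :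
    ((Finset.univ : Finset (Fin N)).filter (fun j : Fin N => (j : ℕ) < m)).card = m := by
  rw [← Finset.card_range m]
  apply Finset.card_bij (fun (j : Fin N) _ => (j : ℕ))
  · intro j hj
    simp only [Finset.mem_filter] at hj
    simpa using hj.2
  · intro j1 h1 j2 h2 hh
    exact Fin.ext hh
  · intro c hc
    simp only [Finset.mem_range] at hc
    exact ⟨⟨c, lt_of_lt_of_le hc h⟩, by simp [hc], rfl⟩

lemma pS_succ {n N : ℕ} (a : Fin n → Fin N → ℝ) (i : Fin n) {m : ℕ} (hm : m < N) :
    pS a i (m + 1) = pS a i m + a i ⟨m, hm⟩ := by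
  have hins : (Finset.univ : Finset (Fin N)).filter (fun j : Fin N => (j : ℕ) < m + 1) =
      insert (⟨m, hm⟩ : Fin N) ((Finset.univ : Finset (Fin N)).filter
        (fun j : Fin N => (j : ℕ) < m)) := by
    ext j
    simp only [Finset.mem_filter, Finset.mem_insert, Finset.mem_univ, true_and, Fin.ext_iff]
    omega
  rw [pS, hins, Finset.sum_insert (by simp), pS]
  ring

lemma pS_nonneg {n N : ℕ} {a : Fin n → Fin N → ℝ} (hpos : ∀ i j, 0 < a i j)
    (i : Fin n) (m : ℕ) : 0 ≤ pS a i m :=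
  Finset.sum_nonneg fun j _ => (hpos i j).le

lemma pS_le_one {n N : ℕ} {a : Fin n → Fin N → ℝ} (hpos : ∀ i j, 0 < a i j)
    (hsum : ∀ i, ∑ j, a i j = 1) (i : Fin n) (m : ℕ) : pS a i m ≤ 1 := by
  rw [← hsum i]
  exact Finset.sum_le_sum_of_subset_of_nonneg (Finset.filter_subset _ _)
    (fun j _ _ => (hpos i j).le)

lemma pS_N {n N : ℕ} {a : Fin n → Fin N → ℝ} (hsum : ∀ i, ∑ j, a i j = 1) (i : Fin n) :
    pS a i N = 1 := by
  rw [pS, Finset.filter_true_of_mem (fun j _ => j.isLt), hsum i]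

lemma pS_pos {n N : ℕ} {a : Fin n → Fin N → ℝ} (hpos : ∀ i j, 0 < a i j)
    (i : Fin n) {m : ℕ} (hm : 1 ≤ m) (hN : 0 < N) : 0 < pS a i m := by
  have hmem : (⟨0, hN⟩ : Fin N) ∈ (Finset.univ : Finset (Fin N)).filter
      (fun j : Fin N => (j : ℕ) < m) := by simp; omega
  calc (0:ℝ) < a i ⟨0, hN⟩ := hpos i _
    _ ≤ pS a i m := Finset.single_le_sum (fun j _ => (hpos i j).le) hmem

lemma orlicz_nonneg {M : ℝ → ℝ} (hM : IsOrlicz M) {t : ℝ} (ht : 0 ≤ t) : 0 ≤ M t := by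
  rcases ht.eq_or_lt with h | h
  · rw [← h, hM.2.1]
  · exact (hM.2.2 t h).le

lemma young_ineq {M : ℝ → ℝ} {s c : ℝ} (h : orliczConj M s = c) (hc : 0 < c)
    {t : ℝ} (ht : 0 ≤ t) : s * t - M t ≤ c := by
  have hbdd : BddAbove {v : ℝ | ∃ u : ℝ, 0 ≤ u ∧ v = s * u - M u} := by
    by_contra hb
    rw [orliczConj, Real.sSup_of_not_bddAbove hb] at h
    linarith
  have h2 := le_csSup hbdd (Set.mem_setOf.mpr ⟨t, ht, rfl⟩)
  rw [← orliczConj] at h2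
  rwa [h] at h2

lemma lemU {M : ℝ → ℝ} (hM : IsOrlicz M) {s c t : ℝ} (h : orliczConj M s = c) (hc : 0 < c)
    (hs : 0 < s) (ht : 0 ≤ t) (hlt : s * t < c) : M t ≤ s * t := by
  rcases ht.eq_or_lt with h0 | htpos
  · rw [← h0, hM.2.1, mul_zero]
  · have hne : {v : ℝ | ∃ u : ℝ, 0 ≤ u ∧ v = s * u - M u}.Nonempty :=
      ⟨s * 0 - M 0, 0, le_rfl, rfl⟩
    have hlt' : s * t < sSup {v : ℝ | ∃ u : ℝ, 0 ≤ u ∧ v = s * u - M u} := by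
      rw [← orliczConj, h]; exact hlt
    obtain ⟨v, hvmem, hv⟩ := exists_lt_of_lt_csSup hne hlt'
    obtain ⟨u, hu, rfl⟩ := hvmem
    have hMu0 : 0 ≤ M u := orlicz_nonneg hM hu
    have htu : t < u := by
      by_contra hcon
      push_neg at hcon
      nlinarith
    have hupos : 0 < u := lt_of_le_of_lt ht htu
    have hconv : M t ≤ (t / u) * M u := by
      have ha : (0:ℝ) ≤ 1 - t / u := by
        have : t / u ≤ 1 := (div_le_one hupos).mpr htu.le
        linarith
      have hb : (0:ℝ) ≤ t / u := by positivity
      have hab : (1 - t / u) + t / u = 1 := by ring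
      have hcvx := hM.1.2 (Set.mem_Ici.mpr (le_refl (0:ℝ))) (Set.mem_Ici.mpr hu) ha hb hab
      have heq : (1 - t / u) • (0:ℝ) + (t / u) • u = t := by
        simp [smul_eq_mul]
        field_simp
      rw [heq] at hcvx
      simpa [hM.2.1, smul_eq_mul] using hcvx
    have h2 : (t / u) * M u ≤ (t / u) * (s * u - s * t) := by
      apply mul_le_mul_of_nonneg_left (by linarith) (by positivity)
    have h3 : (t / u) * (s * u - s * t) = s * t - s * t * (t / u) := by
      field_simp
    nlinarith [mul_nonneg (mul_nonneg hs.le htpos.le) (div_nonneg htpos.le hupos.le)]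

lemma exists_cap {n : ℕ} (k : Fin n → ℕ) (N : ℕ) (h : N ≤ ∑ i, k i) :
    ∃ ℓ : Fin n → ℕ, (∀ i, ℓ i ≤ k i) ∧ ∑ i, ℓ i = N := by
  classical
  obtain ⟨d, hd⟩ : ∃ d, ∑ i, k i = N + d := ⟨∑ i, k i - N, by omega⟩
  clear h
  induction d generalizing k with
  | zero => exact ⟨k, fun _ => le_rfl, by omega⟩
  | succ d ih =>
    have hne : ∑ i, k i ≠ 0 := by omega
    obtain ⟨i₀, -, hi₀⟩ := Finset.exists_ne_zero_of_sum_ne_zero hne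
    have herase : k i₀ + ∑ i ∈ Finset.univ.erase i₀, k i = ∑ i, k i :=
      Finset.add_sum_erase _ _ (Finset.mem_univ i₀)
    have hsum' : ∑ i, Function.update k i₀ (k i₀ - 1) i = N + d := by
      rw [Finset.sum_update_of_mem (Finset.mem_univ i₀), ← Finset.erase_eq]
      omega
    obtain ⟨ℓ, hℓ, hℓs⟩ := ih _ hsum'
    refine ⟨ℓ, fun i => le_trans (hℓ i) ?_, hℓs⟩
    rcases eq_or_ne i i₀ with rfl | hne'
    · simp
    · simp [Function.update_of_ne hne']

end ApproxAux

open ApproxAux in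
/-- Approximation of Musielak–Orlicz norms: the norm `‖x‖_a` given by maximizing over
partial-sum selections is 2-equivalent to the Musielak–Orlicz norm `‖x‖_{Σ M_i}` when
`M_i*(∑_{j=1}^m a_{ij}) = m/N`. -/
theorem approx_musielakNorm (n N : ℕ) (hnN : n ≤ N)
    (a : Fin n → Fin N → ℝ) (M : Fin n → ℝ → ℝ)
    (hdec : ∀ i, ∀ j k : Fin N, j ≤ k → a i k ≤ a i j)
    (hpos : ∀ i j, 0 < a i j)
    (hsum : ∀ i, ∑ j, a i j = 1)
    (hM : ∀ i, IsOrlicz (M i))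
    (hval : ∀ i (m : Fin N),
      orliczConj (M i) (∑ j : Fin N, if j ≤ m then a i j else 0) = ((m : ℕ) + 1) / N)
    (x : Fin n → ℝ) :
    (1 / 2) * sSup {v : ℝ | ∃ ℓ : Fin n → ℕ, ∑ i, ℓ i ≤ N ∧
        v = ∑ i, (∑ j : Fin N, if (j : ℕ) < ℓ i then a i j else 0) * |x i|}
      ≤ musielakNorm M x ∧
    musielakNorm M x ≤
      2 * sSup {v : ℝ | ∃ ℓ : Fin n → ℕ, ∑ i, ℓ i ≤ N ∧
        v = ∑ i, (∑ j : Fin N, if (j : ℕ) < ℓ i then a i j else 0) * |x i|} := by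
  classical
  rcases Nat.eq_zero_or_pos N with hN0 | hNpos
  · -- degenerate case N = 0, hence n = 0
    subst hN0
    have hn0 : n = 0 := Nat.le_zero.mp hnN
    subst hn0
    have hV : {v : ℝ | ∃ ℓ : Fin 0 → ℕ, ∑ i, ℓ i ≤ 0 ∧
        v = ∑ i, (∑ j : Fin 0, if (j : ℕ) < ℓ i then a i j else 0) * |x i|} = {0} := by
      ext v
      constructor
      · rintro ⟨ℓ, -, rfl⟩; simp
      · rintro rfl; exact ⟨fun i => 0, by simp, by simp⟩
    have hmu : musielakNorm M x = 0 := by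
      rw [musielakNorm]
      have hset : {ρ : ℝ | 0 < ρ ∧ ∑ i, M i (|x i| / ρ) ≤ 1} = Set.Ioi 0 := by
        ext ρ; simp
      rw [hset, csInf_Ioi]
    rw [hV, hmu, csSup_singleton]
    norm_num
  have hNR : (0:ℝ) < N := by exact_mod_cast hNpos
  -- value of the conjugate at partial sums
  have spS : ∀ (i : Fin n) (m : ℕ), 1 ≤ m → m ≤ N →
      orliczConj (M i) (pS a i m) = (m : ℝ) / N := by
    intro i m h1 h2
    have hmf : m - 1 < N := by omega
    have hv := hval i ⟨m - 1, hmf⟩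
    have hsum_eq : (∑ j : Fin N, if j ≤ (⟨m - 1, hmf⟩ : Fin N) then a i j else 0)
        = pS a i m := by
      rw [← pS_eq]
      refine Finset.sum_congr rfl fun j _ => ?_
      have hiff : (j ≤ (⟨m - 1, hmf⟩ : Fin N)) ↔ ((j : ℕ) < m) := by
        rw [Fin.le_def]; simp; omega
      by_cases hj : (j : ℕ) < m
      · rw [if_pos (hiff.mpr hj), if_pos hj]
      · rw [if_neg (fun hc => hj (hiff.mp hc)), if_neg hj]
    rw [hsum_eq] at hv
    rw [hv]
    congr 1
    have : (m - 1) + 1 = m := by omega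
    calc (((⟨m - 1, hmf⟩ : Fin N) : ℕ) : ℝ) + 1 = (((m - 1) + 1 : ℕ) : ℝ) := by push_cast; ring
      _ = (m : ℝ) := by rw [this]
  have hMnn : ∀ (i : Fin n) (t : ℝ), 0 ≤ t → 0 ≤ M i t := fun i t ht =>
    orlicz_nonneg (hM i) ht
  have hYoung : ∀ (i : Fin n) (m : ℕ), 1 ≤ m → m ≤ N → ∀ t : ℝ, 0 ≤ t →
      pS a i m * t - M i t ≤ (m : ℝ) / N := by
    intro i m h1 h2 t ht
    exact young_ineq (spS i m h1 h2) (by positivity) ht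
  have hLemU : ∀ (i : Fin n) (m : ℕ), 1 ≤ m → m ≤ N → ∀ t : ℝ, 0 ≤ t →
      pS a i m * t < (m : ℝ) / N → M i t ≤ pS a i m * t := by
    intro i m h1 h2 t ht hlt
    exact lemU (hM i) (spS i m h1 h2) (by positivity) (pS_pos hpos i h1 hNpos) ht hlt
  set V : Set ℝ := {v : ℝ | ∃ ℓ : Fin n → ℕ, ∑ i, ℓ i ≤ N ∧
      v = ∑ i, (∑ j : Fin N, if (j : ℕ) < ℓ i then a i j else 0) * |x i|} with hVdef
  have hmemV : ∀ ℓ : Fin n → ℕ, ∑ i, ℓ i ≤ N → (∑ i, pS a i (ℓ i) * |x i|) ∈ V := by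
    intro ℓ hℓ
    exact ⟨ℓ, hℓ, Finset.sum_congr rfl fun i _ => by rw [pS_eq]⟩
  have hVbdd : BddAbove V := by
    refine ⟨∑ i, |x i|, ?_⟩
    rintro v ⟨ℓ, hℓ, rfl⟩
    apply Finset.sum_le_sum
    intro i _
    rw [pS_eq]
    exact mul_le_of_le_one_left (abs_nonneg _) (pS_le_one hpos hsum i (ℓ i))
  have hV0 : (0:ℝ) ∈ V := by
    refine ⟨fun _ => 0, by simp, ?_⟩
    simp
  have hS0 : 0 ≤ sSup V := le_csSup hVbdd hV0
  -- lower bound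
  have hPne : {ρ : ℝ | 0 < ρ ∧ ∑ i, M i (|x i| / ρ) ≤ 1}.Nonempty := by
    refine ⟨2 * (∑ i, |x i|) + 1, ?_, ?_⟩
    · positivity
    · have hxs : 0 ≤ ∑ i, |x i| := Finset.sum_nonneg fun i _ => abs_nonneg _
      have hρ0 : (0:ℝ) < 2 * (∑ i, |x i|) + 1 := by positivity
      have hterm : ∀ i : Fin n, M i (|x i| / (2 * (∑ i, |x i|) + 1))
          ≤ |x i| / (2 * (∑ i, |x i|) + 1) := by
        intro i
        have hxi : |x i| ≤ ∑ i', |x i'| :=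
          Finset.single_le_sum (f := fun i' => |x i'|) (fun i' _ => abs_nonneg (x i'))
            (Finset.mem_univ i)
        have hlt : pS a i N * (|x i| / (2 * (∑ i, |x i|) + 1)) < (N : ℝ) / N := by
          rw [pS_N hsum, one_mul, div_self (ne_of_gt hNR)]
          rw [div_lt_one hρ0]
          linarith
        have := hLemU i N hNpos le_rfl _ (by positivity) hlt
        rwa [pS_N hsum, one_mul] at this
      calc ∑ i, M i (|x i| / (2 * (∑ i, |x i|) + 1))
          ≤ ∑ i, |x i| / (2 * (∑ i, |x i|) + 1) := Finset.sum_le_sum fun i _ => hterm i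
        _ = (∑ i, |x i|) / (2 * (∑ i, |x i|) + 1) := by rw [Finset.sum_div]
        _ ≤ 1 := by rw [div_le_one hρ0]; linarith
  have hlow : 1 / 2 * sSup V ≤ musielakNorm M x := by
    rw [musielakNorm]
    apply le_csInf hPne
    rintro ρ ⟨hρ, hρ1⟩
    have hSle : sSup V ≤ 2 * ρ := by
      apply csSup_le ⟨0, hV0⟩
      rintro v ⟨ℓ, hℓ, rfl⟩
      have hterm : ∀ i : Fin n, (∑ j : Fin N, if (j : ℕ) < ℓ i then a i j else 0) * |x i|
          ≤ ρ * (M i (|x i| / ρ) + (ℓ i : ℝ) / N) := by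
        intro i
        rw [pS_eq]
        rcases Nat.eq_zero_or_pos (ℓ i) with h0 | h1
        · rw [h0, pS_zero, zero_mul]
          have hM0 := hMnn i (|x i| / ρ) (by positivity)
          have hz : ρ * (M i (|x i| / ρ) + ((0:ℕ):ℝ) / N) = ρ * M i (|x i| / ρ) := by
            norm_num
          rw [hz]
          exact mul_nonneg hρ.le hM0
        · have hle : ℓ i ≤ N := le_trans
            (Finset.single_le_sum (f := ℓ) (fun _ _ => Nat.zero_le _) (Finset.mem_univ i)) hℓ
          have hy := hYoung i (ℓ i) h1 hle (|x i| / ρ) (by positivity)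
          have hxx : pS a i (ℓ i) * |x i| = ρ * (pS a i (ℓ i) * (|x i| / ρ)) := by
            field_simp
          rw [hxx]
          apply mul_le_mul_of_nonneg_left _ hρ.le
          linarith
      calc ∑ i, (∑ j : Fin N, if (j : ℕ) < ℓ i then a i j else 0) * |x i|
          ≤ ∑ i, ρ * (M i (|x i| / ρ) + (ℓ i : ℝ) / N) := Finset.sum_le_sum fun i _ => hterm i
        _ = ρ * ((∑ i, M i (|x i| / ρ)) + ∑ i, (ℓ i : ℝ) / N) := by
            rw [← Finset.mul_sum, Finset.sum_add_distrib]
        _ ≤ ρ * (1 + 1) := by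
            apply mul_le_mul_of_nonneg_left _ hρ.le
            have h2 : ∑ i, (ℓ i : ℝ) / N = ((∑ i, ℓ i : ℕ) : ℝ) / N := by
              rw [← Finset.sum_div]; push_cast; ring
            have h3 : ((∑ i, ℓ i : ℕ) : ℝ) / N ≤ 1 := by
              rw [div_le_one hNR]; exact_mod_cast hℓ
            linarith
        _ = 2 * ρ := by ring
    linarith
  refine ⟨hlow, ?_⟩
  -- upper bound
  by_cases hx0 : ∀ i, x i = 0
  · have hmu : musielakNorm M x ≤ 0 := by
      rw [musielakNorm]
      have hset : {ρ : ℝ | 0 < ρ ∧ ∑ i, M i (|x i| / ρ) ≤ 1} = Set.Ioi 0 := by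
        ext ρ
        simp only [Set.mem_setOf_eq, Set.mem_Ioi, and_iff_left_iff_imp]
        intro hρ
        have : ∀ i : Fin n, M i (|x i| / ρ) = 0 := fun i => by
          rw [hx0 i]; simp [(hM i).2.1]
        rw [Finset.sum_congr rfl fun i _ => this i]
        simp
      rw [hset, csInf_Ioi]
    linarith
  · push_neg at hx0
    obtain ⟨i₀, hi₀⟩ := hx0
    have hxpos : 0 < |x i₀| := abs_pos.mpr hi₀
    have hSpos : 0 < sSup V := by
      have hmem := hmemV (fun i => if i = i₀ then 1 else 0)
        (by rw [Finset.sum_ite_eq' Finset.univ i₀ (fun _ => 1)]; simp; omega)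
      refine lt_of_lt_of_le ?_ (le_csSup hVbdd hmem)
      apply Finset.sum_pos'
      · intro i _
        exact mul_nonneg (pS_nonneg hpos i _) (abs_nonneg _)
      · refine ⟨i₀, Finset.mem_univ i₀, ?_⟩
        simp only [if_pos rfl]
        exact mul_pos (pS_pos hpos i₀ le_rfl hNpos) hxpos
    set S := sSup V with hSdef
    set y : Fin n → ℝ := fun i => |x i| / (2 * S) with hy
    have hy0 : ∀ i, 0 ≤ y i := fun i => by rw [hy]; positivity
    have hcon : ∀ ℓ : Fin n → ℕ, ∑ i, ℓ i ≤ N → ∑ i, pS a i (ℓ i) * y i ≤ 1 / 2 := by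
      intro ℓ hℓ
      have h1 : ∑ i, pS a i (ℓ i) * |x i| ≤ S := le_csSup hVbdd (hmemV ℓ hℓ)
      have h2 : ∑ i, pS a i (ℓ i) * y i = (∑ i, pS a i (ℓ i) * |x i|) / (2 * S) := by
        rw [Finset.sum_div]
        refine Finset.sum_congr rfl fun i _ => ?_
        rw [hy]; ring
      rw [h2, div_le_iff₀ (by positivity)]
      linarith
    have hy_half : ∀ i, y i ≤ 1 / 2 := by
      intro i
      have hadm : ∑ i', (fun i' => if i' = i then N else 0) i' ≤ N := by
        rw [Finset.sum_ite_eq' Finset.univ i (fun _ => N)]; simp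
      have h1 := hcon _ hadm
      have h2 : pS a i N * y i ≤ ∑ i', pS a i' (if i' = i then N else 0) * y i' := by
        have := Finset.single_le_sum
          (f := fun i' => pS a i' (if i' = i then N else 0) * y i')
          (fun i' _ => mul_nonneg (pS_nonneg hpos i' _) (hy0 i')) (Finset.mem_univ i)
        simpa using this
      rw [pS_N hsum, one_mul] at h2
      linarith
    set k : Fin n → ℕ := fun i =>
      Nat.findGreatest (fun m => (m : ℝ) / N ≤ pS a i m * y i) N with hk
    have hkle : ∀ i, k i ≤ N := fun i => Nat.findGreatest_le N
    have hkP : ∀ i, ((k i : ℝ)) / N ≤ pS a i (k i) * y i := by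
      intro i
      exact Nat.findGreatest_spec (P := fun m => (m : ℝ) / N ≤ pS a i m * y i)
        (Nat.zero_le N) (by simp [pS_zero])
    have hklt : ∀ i, k i < N := by
      intro i
      rcases lt_or_eq_of_le (hkle i) with h | h
      · exact h
      · exfalso
        have h1 := hkP i
        rw [h, div_self (ne_of_gt hNR), pS_N hsum, one_mul] at h1
        have := hy_half i
        linarith
    have hkmax : ∀ i, pS a i (k i + 1) * y i < ((k i : ℝ) + 1) / N := by
      intro i
      have h1 := Nat.findGreatest_is_greatest (P := fun m => (m : ℝ) / N ≤ pS a i m * y i)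
        (lt_add_one (k i)) (by have := hklt i; omega)
      simp only [Nat.cast_add, Nat.cast_one] at h1
      exact lt_of_not_ge h1
    -- down-closedness
    have hdc : ∀ i, ∀ m, m ≤ k i → (m : ℝ) / N ≤ pS a i m * y i := by
      intro i m hm
      by_contra hcon'
      push_neg at hcon'
      have hkN : k i ≤ N := hkle i
      have hmN : m ≤ N := le_trans hm hkN
      set d : Fin N → ℝ := fun j => a i j * y i - 1 / N with hd
      have hsum_d : ∀ m', m' ≤ N →
          ∑ j ∈ Finset.univ.filter (fun j : Fin N => (j : ℕ) < m'), d j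
            = pS a i m' * y i - (m' : ℝ) / N := by
        intro m' hm'
        rw [hd]
        rw [Finset.sum_sub_distrib, ← Finset.sum_mul, Finset.sum_const,
          card_filter_lt N m' hm', nsmul_eq_mul]
        rw [pS]
        ring
      have hsub : Finset.univ.filter (fun j : Fin N => (j : ℕ) < m) ⊆
          Finset.univ.filter (fun j : Fin N => (j : ℕ) < k i) := by
        intro j hj
        simp only [Finset.mem_filter, Finset.mem_univ, true_and] at hj ⊢
        omega
      have hsdiff := Finset.sum_sdiff (f := d) hsub
      have e1 := hsum_d m hmN
      have e2 := hsum_d (k i) hkN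
      have hkp := hkP i
      have hpos_sum : 0 < ∑ j ∈ (Finset.univ.filter (fun j : Fin N => (j : ℕ) < k i)) \
          (Finset.univ.filter (fun j : Fin N => (j : ℕ) < m)), d j := by
        linarith
      obtain ⟨j₀, hj₀mem, hj₀⟩ := Finset.exists_lt_of_sum_lt
        (f := fun _ : Fin N => (0:ℝ)) (g := d) (by simpa using hpos_sum)
      have hj₀m : m ≤ (j₀ : ℕ) := by
        simp only [Finset.mem_sdiff, Finset.mem_filter, Finset.mem_univ, true_and] at hj₀mem
        omega
      have hglb : ∀ j ∈ Finset.univ.filter (fun j : Fin N => (j : ℕ) < m), d j₀ ≤ d j := by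
        intro j hj
        simp only [Finset.mem_filter, Finset.mem_univ, true_and] at hj
        have hjj : j ≤ j₀ := by rw [Fin.le_def]; omega
        have haa := hdec i j j₀ hjj
        rw [hd]
        simp only
        have := mul_le_mul_of_nonneg_right haa (hy0 i)
        linarith
      have hcard := Finset.card_nsmul_le_sum
        (Finset.univ.filter (fun j : Fin N => (j : ℕ) < m)) d (d j₀) hglb
      have h0le : (0:ℝ) ≤ (Finset.univ.filter (fun j : Fin N => (j : ℕ) < m)).card • d j₀ :=
        nsmul_nonneg (le_of_lt hj₀) _
      linarith
    have hKle : ∑ i, k i ≤ N := by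
      by_contra hcon'
      push_neg at hcon'
      obtain ⟨ℓ, hℓk, hℓsum⟩ := exists_cap k N hcon'.le
      have h1 := hcon ℓ (le_of_eq hℓsum)
      have h2 : (1 : ℝ) ≤ ∑ i, pS a i (ℓ i) * y i := by
        have e1 : (1:ℝ) = ∑ i, (ℓ i : ℝ) / N := by
          rw [← Finset.sum_div]
          rw [show ∑ i, (ℓ i : ℝ) = ((∑ i, ℓ i : ℕ) : ℝ) by push_cast; ring, hℓsum,
            div_self (ne_of_gt hNR)]
        rw [e1]
        exact Finset.sum_le_sum fun i _ => hdc i (ℓ i) (hℓk i)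
      linarith
    have hKhalf : ((∑ i, k i : ℕ) : ℝ) / N ≤ 1 / 2 := by
      have h1 := hcon k hKle
      have h2 : ((∑ i, k i : ℕ) : ℝ) / N = ∑ i, (k i : ℝ) / N := by
        rw [← Finset.sum_div]; push_cast; ring
      rw [h2]
      calc ∑ i, (k i : ℝ) / N ≤ ∑ i, pS a i (k i) * y i :=
            Finset.sum_le_sum fun i _ => hkP i
        _ ≤ 1 / 2 := h1
    obtain ⟨I, hIsub, hIcard⟩ := Finset.exists_subset_card_eq
      (s := (Finset.univ : Finset (Fin n))) (n := min (N - ∑ i, k i) n)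
      (by rw [Finset.card_univ, Fintype.card_fin]; omega)
    set ℓf : Fin n → ℕ := fun i => k i + (if i ∈ I then 1 else 0) with hℓf
    have hℓfsum : ∑ i, ℓf i ≤ N := by
      rw [hℓf]
      rw [Finset.sum_add_distrib]
      have hione : ∑ i, (if i ∈ I then 1 else 0) = I.card := by
        rw [Finset.sum_ite_mem, Finset.univ_inter, Finset.card_eq_sum_ones]
      rw [hione, hIcard]
      omega
    have hub : ∀ i, M i (y i) ≤ pS a i (k i + 1) * y i := by
      intro i
      have h1 : (1:ℕ) ≤ k i + 1 := by omega
      have h2 : k i + 1 ≤ N := by have := hklt i; omega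
      have h3 := hkmax i
      have hcast : ((k i + 1 : ℕ) : ℝ) = (k i : ℝ) + 1 := by push_cast; ring
      apply hLemU i (k i + 1) h1 h2 (y i) (hy0 i)
      rw [hcast]
      exact h3
    have hb : ∀ i, a i ⟨k i, hklt i⟩ * y i ≤ 1 / N := by
      intro i
      have h1 := hkP i
      have h2 := hkmax i
      have h3 : pS a i (k i + 1) = pS a i (k i) + a i ⟨k i, hklt i⟩ := pS_succ a i (hklt i)
      rw [h3, add_mul] at h2
      have h4 : ((k i : ℝ) + 1) / N = (k i : ℝ) / N + 1 / N := by ring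
      linarith [h2, h4 ▸ h2]
    have hfin : ∑ i, M i (y i) ≤ 1 := by
      have hsplit : ∑ i, pS a i (k i + 1) * y i
          = ∑ i, pS a i (ℓf i) * y i + ∑ i ∈ Finset.univ \ I, a i ⟨k i, hklt i⟩ * y i := by
        have hterm : ∀ i ∈ Finset.univ, pS a i (k i + 1) * y i
            = pS a i (ℓf i) * y i + (if i ∈ I then 0 else a i ⟨k i, hklt i⟩ * y i) := by
          intro i _
          by_cases hi : i ∈ I
          · rw [hℓf]; simp only [hi, if_pos, if_true]
            rw [add_zero]
          · rw [hℓf]; simp only [hi, if_false, if_neg, add_zero]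
            rw [pS_succ a i (hklt i)]
            ring
        rw [Finset.sum_congr rfl hterm, Finset.sum_add_distrib]
        congr 1
        rw [Finset.sum_ite, Finset.sum_const_zero, zero_add]
        apply Finset.sum_congr _ (fun _ _ => rfl)
        ext i
        simp [Finset.mem_sdiff, Finset.mem_filter]
      have h1 : ∑ i, pS a i (ℓf i) * y i ≤ 1 / 2 := hcon ℓf hℓfsum
      have h2 : ∑ i ∈ Finset.univ \ I, a i ⟨k i, hklt i⟩ * y i
          ≤ ((Finset.univ \ I).card : ℝ) * (1 / N) := by
        have := Finset.sum_le_card_nsmul (Finset.univ \ I)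
          (fun i => a i ⟨k i, hklt i⟩ * y i) (1 / N) (fun i _ => hb i)
        rwa [nsmul_eq_mul] at this
      have hcard2 : (Finset.univ \ I).card = n - min (N - ∑ i, k i) n := by
        rw [Finset.card_sdiff_of_subset hIsub, Finset.card_univ, Fintype.card_fin, hIcard]
      have h3 : ((Finset.univ \ I).card : ℝ) * (1 / N) ≤ ((∑ i, k i : ℕ) : ℝ) * (1 / N) := by
        apply mul_le_mul_of_nonneg_right _ (by positivity)
        have hcd : (Finset.univ \ I).card ≤ ∑ i, k i := by
          rw [hcard2]; omega
        exact_mod_cast hcd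
      have h4 : ((∑ i, k i : ℕ) : ℝ) * (1 / N) ≤ 1 / 2 := by
        rw [mul_one_div]; exact hKhalf
      calc ∑ i, M i (y i) ≤ ∑ i, pS a i (k i + 1) * y i :=
            Finset.sum_le_sum fun i _ => hub i
        _ = _ := hsplit
        _ ≤ 1 / 2 + 1 / 2 := add_le_add h1 (le_trans h2 (le_trans h3 h4))
        _ = 1 := by norm_num
    rw [musielakNorm]
    have h2S : musielakNorm M x ≤ 2 * S := by
      rw [musielakNorm]
      apply csInf_le ⟨0, fun ρ hρ => hρ.1.le⟩
      exact ⟨by positivity, hfin⟩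
    rw [musielakNorm] at h2S
    exact h2S
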